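/- For weak compositions α, γ of length n, the following are equivalent: (1) γ ≤ α in Bruhat order; (2) every reverse semistandard Young tableau T of shape γ⁺ with left key K₋(T) ≤ key(γ) also satisfies K₋(T) ≤ key(α), i.e., RSSYT(γ) ⊆ RSSYT(α). -/

import Mathlib

/-- The `j`-th largest element (0-indexed) of a finite set of `Fin n`,
viewed as an element of `[n] = {1,...,n}` via `i ↦ i + 1`; `0` as default. -/
def jthLargestF (n : ℕ) (S : Finset (Fin n)) (j : ℕ) : ℕ :=
  (((Finset.sort S (· ≤ ·)).reverse).map (fun i => (i : ℕ) + 1)).getD j 0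

/-- The `j`-th smallest element (0-indexed), similarly. -/
def jthSmallestF (n : ℕ) (S : Finset (Fin n)) (j : ℕ) : ℕ :=
  ((Finset.sort S (· ≤ ·)).map (fun i => (i : ℕ) + 1)).getD j 0

/-- Order on subsets of `[n]`: equal cardinality and `j`-th largest elements compare. -/
def setLEF (n : ℕ) (S T : Finset (Fin n)) : Prop :=
  S.card = T.card ∧ ∀ j < S.card, jthLargestF n S j ≤ jthLargestF n T j

/-- The `c`-th column of the key tableau of the weak composition `α`: `{i : α i ≥ c}`. -/
def col (n : ℕ) (α : Fin n → ℕ) (c : ℕ) : Finset (Fin n) :=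
  Finset.univ.filter (fun i => c ≤ α i)

/-- The support of a weak composition. -/
def suppC (n : ℕ) (α : Fin n → ℕ) : Finset (Fin n) :=
  Finset.univ.filter (fun i => 0 < α i)

/-- Bruhat order on weak compositions: key tableaux have the same shape and
compare entry-wise, expressed column by column. -/
def bruhatLE (n : ℕ) (γ α : Fin n → ℕ) : Prop :=
  ∀ c : ℕ, 1 ≤ c → setLEF n (col n γ c) (col n α c)

/-- `μ` is the Bruhat-minimum of `{γ : γ ≥ α, supp γ ⊆ S}`. -/
def isBruhatMin (n : ℕ) (α : Fin n → ℕ) (S : Finset (Fin n)) (μ : Fin n → ℕ) : Prop :=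
  bruhatLE n α μ ∧ suppC n μ ⊆ S ∧
    ∀ γ : Fin n → ℕ, bruhatLE n α γ → suppC n γ ⊆ S → bruhatLE n μ γ

/-- `μ` is the Bruhat-maximum of `{γ : γ ≤ α, supp γ ⊆ S}`. -/
def isBruhatMax (n : ℕ) (α : Fin n → ℕ) (S : Finset (Fin n)) (μ : Fin n → ℕ) : Prop :=
  bruhatLE n μ α ∧ suppC n μ ⊆ S ∧
    ∀ γ : Fin n → ℕ, bruhatLE n γ α → suppC n γ ⊆ S → bruhatLE n γ μ

/-- `γ` is obtained from `α` by a single left swap: exchange parts `α i < α j` with `i < j`. -/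
def leftSwapStep (n : ℕ) (γ α : Fin n → ℕ) : Prop :=
  ∃ i j : Fin n, i < j ∧ α i < α j ∧ γ = fun k => α (Equiv.swap i j k)

/-- The left swap order: reflexive-transitive closure of single left swaps. -/
def leftSwapLE (n : ℕ) (γ α : Fin n → ℕ) : Prop :=
  Relation.ReflTransGen (leftSwapStep n) γ α

/-- `B = C ◁ A`: there is a strictly increasing choice `b` of elements of `C`,
`b k` being the smallest element of `C` that is `≥` the `k`-th smallest element
of `A` and exceeds all previously chosen elements, with `B` the set of chosen elements. -/
def isLhd (n : ℕ) (C A B : Finset (Fin n)) : Prop :=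
  ∃ b : Fin A.card → Fin n, StrictMono b ∧ (∀ k, b k ∈ C) ∧
    (∀ k : Fin A.card, jthSmallestF n A k ≤ (b k : ℕ) + 1) ∧
    (∀ k : Fin A.card, ∀ c ∈ C, jthSmallestF n A k ≤ (c : ℕ) + 1 →
      (∀ j : Fin A.card, j < k → b j < c) → b k ≤ c) ∧
    B = Finset.image b Finset.univ

/-- `lhdChain [C₁, ..., C_k] B` means `B = C₁ ◁ (C₂ ◁ (⋯ ◁ C_k))`. -/
def lhdChain (n : ℕ) : List (Finset (Fin n)) → Finset (Fin n) → Prop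
  | [], B => B = ∅
  | [C], B => B = C
  | C :: D :: rest, B => ∃ B', lhdChain n (D :: rest) B' ∧ isLhd n C B' B

/-- `T ∈ RSSYT(α)`: a reverse semistandard Young tableau of shape `α⁺`, encoded by its
columns (strictly decreasing sets, rows weakly decreasing), whose left key is
entry-wise at most `key α`. -/
def memRSSYT (n : ℕ) (α : Fin n → ℕ) (T : ℕ → Finset (Fin n)) : Prop :=
  (∀ c, 1 ≤ c → (T c).card = (col n α c).card) ∧
  (∀ c, 1 ≤ c → ∀ k < (T (c+1)).card, jthLargestF n (T (c+1)) k ≤ jthLargestF n (T c) k) ∧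
  (∀ c, 1 ≤ c → ∃ B, lhdChain n ((List.range c).map (fun i => T (i+1))) B ∧
    setLEF n B (col n α c))

/-- `(L, E) ∈ RSVT(α)`: a reverse set-valued tableau of shape `α⁺` encoded as a diagram
pair by columns: `L c` the leading entries and `E c` the extra entries of column `c`,
with left key (of the leading tableau) entry-wise at most `key α`. -/
def memRSVT (n : ℕ) (α : Fin n → ℕ) (L E : ℕ → Finset (Fin n)) : Prop :=
  (∀ c, 1 ≤ c → Disjoint (L c) (E c)) ∧
  (∀ c, 1 ≤ c → (L c).card = (col n α c).card) ∧
  (∀ c, 1 ≤ c → ∀ k < (L (c+1)).card, jthLargestF n (L (c+1)) k ≤ jthLargestF n (L c) k) ∧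
  (∀ c, 1 ≤ c → ∀ e ∈ E c,
    ((L (c+1)).filter (fun l => e < l)).card < ((L c).filter (fun l => e < l)).card) ∧
  (∀ c, 1 ≤ c → ∃ B, lhdChain n ((List.range c).map (fun i => L (i+1))) B ∧
    setLEF n B (col n α c))

/-- `(L, E)` is a valid reverse set-valued tableau (of some shape), without any
left-key condition. -/
def isValidRSVT (n : ℕ) (L E : ℕ → Finset (Fin n)) : Prop :=
  (∀ c, 1 ≤ c → Disjoint (L c) (E c)) ∧
  (∀ c, 1 ≤ c → (L (c+1)).card ≤ (L c).card) ∧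
  (∃ N, ∀ c, N ≤ c → L c = ∅ ∧ E c = ∅) ∧
  (∀ c, 1 ≤ c → ∀ k < (L (c+1)).card, jthLargestF n (L (c+1)) k ≤ jthLargestF n (L c) k) ∧
  (∀ c, 1 ≤ c → ∀ e ∈ E c,
    ((L (c+1)).filter (fun l => e < l)).card < ((L c).filter (fun l => e < l)).card)

/-- `j`-th largest element of a finite set of naturals (0-indexed), default `0`. -/
def jthLargestN (S : Finset ℕ) (j : ℕ) : ℕ :=
  ((Finset.sort S (· ≤ ·)).reverse).getD j 0

/-- `j`-th smallest element of a finite set of naturals (0-indexed), default `0`. -/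
def jthSmallestN (S : Finset ℕ) (j : ℕ) : ℕ :=
  (Finset.sort S (· ≤ ·)).getD j 0


section AuxLemmas

lemma getD_anti {l : List ℕ} (h : l.Pairwise (· ≥ ·)) {i j : ℕ} (hij : i ≤ j) :
    l.getD j 0 ≤ l.getD i 0 := by
  rcases lt_or_ge j l.length with hj | hj
  · rw [List.getD_eq_getElem _ _ hj, List.getD_eq_getElem _ _ (lt_of_le_of_lt hij hj)]
    rcases eq_or_lt_of_le hij with rfl | hlt
    · exact le_refl _
    · exact h.rel_get_of_lt (a := ⟨i, lt_of_le_of_lt hij hj⟩) (b := ⟨j, hj⟩) hlt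
  · rw [List.getD_eq_default _ _ hj]
    exact Nat.zero_le _

lemma sublist_getD_le : ∀ {l m : List ℕ}, List.Sublist l m → m.Pairwise (· ≥ ·) →
    ∀ j, l.getD j 0 ≤ m.getD j 0 := by
  intro l m h
  induction h with
  | slnil => intro _ j; simp
  | @cons l m a h ih =>
    intro hm j
    have hm' : _ := hm.of_cons
    cases j with
    | zero =>
      cases l with
      | nil => simp
      | cons x xs =>
        have hx := h.subset List.mem_cons_self
        simpa using (List.pairwise_cons.mp hm).1 x hx
    | succ j =>
      rw [List.getD_cons_succ]
      exact (ih hm' (j+1)).trans (getD_anti hm' (Nat.le_succ j))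
  | @cons_cons l m a h ih =>
    intro hm j
    cases j with
    | zero => simp
    | succ j =>
      rw [List.getD_cons_succ, List.getD_cons_succ]
      exact ih hm.of_cons j

lemma jthLargestF_def (n : ℕ) (S : Finset (Fin n)) (j : ℕ) :
    jthLargestF n S j =
      (((Finset.sort S (· ≤ ·)).reverse).map (fun i : Fin n => (i : ℕ) + 1)).getD j 0 := by
  simp only [jthLargestF, bind_pure_comp, List.map_eq_map, List.map_map]
  rfl

lemma jthSmallestF_def (n : ℕ) (S : Finset (Fin n)) (j : ℕ) :
    jthSmallestF n S j = ((Finset.sort S (· ≤ ·)).map (fun i : Fin n => (i : ℕ) + 1)).getD j 0 := by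
  simp only [jthSmallestF, bind_pure_comp, List.map_eq_map, List.map_map]
  rfl

lemma sortedDesc (n : ℕ) (S : Finset (Fin n)) :
    (((Finset.sort S (· ≤ ·)).reverse).map (fun i : Fin n => (i : ℕ) + 1)).Pairwise (· ≥ ·) := by
  refine List.Pairwise.map _ (fun a b (hab : b ≤ a) => Nat.succ_le_succ hab) ?_
  rw [List.pairwise_reverse]
  exact Finset.pairwise_sort _ _

lemma jthLargestF_mono {n : ℕ} {S T : Finset (Fin n)} (h : S ⊆ T) (j : ℕ) :
    jthLargestF n S j ≤ jthLargestF n T j := by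
  rw [jthLargestF_def, jthLargestF_def]
  have hsub : List.Sublist (Finset.sort S (· ≤ ·)) (Finset.sort T (· ≤ ·)) :=
    List.sublist_of_subperm_of_pairwise
      (List.subperm_of_subset (Finset.sort_nodup _ _)
        (fun a ha => (Finset.mem_sort _).mpr (h ((Finset.mem_sort _).mp ha))))
      (Finset.pairwise_sort _ _) (Finset.pairwise_sort _ _)
  exact sublist_getD_le ((hsub.reverse).map _) (sortedDesc n T) j

lemma jthSmallestF_eq {n : ℕ} (A : Finset (Fin n)) (k : ℕ) (hk : k < A.card) :
    jthSmallestF n A k = ((A.orderEmbOfFin rfl ⟨k, hk⟩ : Fin n) : ℕ) + 1 := by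
  rw [jthSmallestF_def]
  have hlen : k < ((Finset.sort A (· ≤ ·)).map (fun i : Fin n => (i : ℕ) + 1)).length := by
    simpa using hk
  rw [List.getD_eq_getElem _ _ hlen, List.getElem_map, Finset.orderEmbOfFin_apply]
  rfl

lemma isLhd_self {n : ℕ} (C A : Finset (Fin n)) (hAC : A ⊆ C) : isLhd n C A A := by
  refine ⟨fun k => A.orderEmbOfFin rfl k, (A.orderEmbOfFin rfl).strictMono,
    fun k => hAC (Finset.orderEmbOfFin_mem _ _ _), ?_, ?_, ?_⟩
  · intro k
    rw [jthSmallestF_eq A k k.2]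
  · intro k c _ hkc _
    rw [jthSmallestF_eq A k k.2] at hkc
    have hvc : ((A.orderEmbOfFin rfl ⟨(k : ℕ), k.2⟩ : Fin n) : ℕ) ≤ (c : ℕ) := by omega
    exact Fin.le_def.mpr hvc
  · ext x
    simp only [Finset.mem_image, Finset.mem_univ, true_and]
    constructor
    · intro hx
      have : x ∈ Set.range (A.orderEmbOfFin rfl) := by
        rw [Finset.range_orderEmbOfFin]; exact hx
      obtain ⟨k, hk⟩ := this
      exact ⟨k, hk⟩
    · rintro ⟨k, rfl⟩
      exact Finset.orderEmbOfFin_mem _ _ _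

lemma isLhd_unique {n : ℕ} {C A B₁ B₂ : Finset (Fin n)}
    (h₁ : isLhd n C A B₁) (h₂ : isLhd n C A B₂) : B₁ = B₂ := by
  obtain ⟨b₁, hm₁, hC₁, hs₁, hmin₁, rfl⟩ := h₁
  obtain ⟨b₂, hm₂, hC₂, hs₂, hmin₂, rfl⟩ := h₂
  have hb : ∀ m : ℕ, ∀ k : Fin A.card, (k : ℕ) = m → b₁ k = b₂ k := by
    intro m
    induction m using Nat.strong_induction_on with
    | _ m ih =>
      intro k hk
      subst hk
      have hprev : ∀ j : Fin A.card, j < k → b₁ j = b₂ j := fun j hj => ih j hj j rfl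
      have h12 : b₁ k ≤ b₂ k :=
        hmin₁ k (b₂ k) (hC₂ k) (hs₂ k) (fun j hj => (hprev j hj).trans_lt (hm₂ hj))
      have h21 : b₂ k ≤ b₁ k :=
        hmin₂ k (b₁ k) (hC₁ k) (hs₁ k) (fun j hj => (hprev j hj).symm.trans_lt (hm₁ hj))
      exact le_antisymm h12 h21
  have hbb : b₁ = b₂ := funext fun k => hb k k rfl
  rw [hbb]

lemma lhdChain_unique {n : ℕ} : ∀ (L : List (Finset (Fin n))) {B₁ B₂ : Finset (Fin n)},
    lhdChain n L B₁ → lhdChain n L B₂ → B₁ = B₂ := by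
  intro L
  induction L with
  | nil => intro B₁ B₂ h₁ h₂; rw [show B₁ = ∅ from h₁, show B₂ = ∅ from h₂]
  | cons C L ih =>
    intro B₁ B₂ h₁ h₂
    cases L with
    | nil => exact (show B₁ = C from h₁).trans (show B₂ = C from h₂).symm
    | cons D rest =>
      obtain ⟨B₁', hc₁, hl₁⟩ := h₁
      obtain ⟨B₂', hc₂, hl₂⟩ := h₂
      rw [ih hc₁ hc₂] at hl₁
      exact isLhd_unique hl₁ hl₂

lemma lhdChain_nested {n : ℕ} : ∀ (L : List (Finset (Fin n))) (C : Finset (Fin n)),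
    (∀ X ∈ L, C ⊆ X) → lhdChain n (L ++ [C]) C := by
  intro L
  induction L with
  | nil => intro C _; rfl
  | cons X L ih =>
    intro C h
    have hXC : C ⊆ X := h X List.mem_cons_self
    have htail := ih C (fun Z hZ => h Z (List.mem_cons_of_mem X hZ))
    cases L with
    | nil => exact ⟨C, htail, isLhd_self X C hXC⟩
    | cons Y L' => exact ⟨C, htail, isLhd_self X C hXC⟩

lemma col_subset (n : ℕ) (γ : Fin n → ℕ) {c d : ℕ} (h : c ≤ d) :
    col n γ d ⊆ col n γ c := by
  intro i hi
  simp only [col, Finset.mem_filter, Finset.mem_univ, true_and] at *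
  omega

lemma key_chain (n : ℕ) (γ : Fin n → ℕ) (c : ℕ) (hc : 1 ≤ c) :
    lhdChain n ((List.range c).map (fun i => col n γ (i+1))) (col n γ c) := by
  obtain ⟨d, rfl⟩ : ∃ d, c = d + 1 := ⟨c - 1, by omega⟩
  rw [List.range_succ, List.map_append]
  apply lhdChain_nested
  intro X hX
  simp only [List.mem_map, List.mem_range] at hX
  obtain ⟨i, hi, rfl⟩ := hX
  exact col_subset n γ (by omega)

lemma setLEF_refl (n : ℕ) (S : Finset (Fin n)) : setLEF n S S :=
  ⟨rfl, fun _ _ => le_rfl⟩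

lemma setLEF_trans {n : ℕ} {S T U : Finset (Fin n)}
    (h₁ : setLEF n S T) (h₂ : setLEF n T U) : setLEF n S U :=
  ⟨h₁.1.trans h₂.1, fun j hj => (h₁.2 j hj).trans (h₂.2 j (h₁.1 ▸ hj))⟩

end AuxLemmas

/-- `γ ≤ α` in Bruhat order iff `RSSYT(γ) ⊆ RSSYT(α)`. -/
theorem stmt14 (n : ℕ) (α γ : Fin n → ℕ) :
    bruhatLE n γ α ↔ (∀ T : ℕ → Finset (Fin n), memRSSYT n γ T → memRSSYT n α T) := by
  constructor
  · intro h T hT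
    obtain ⟨hcard, hrow, hkey⟩ := hT
    refine ⟨fun c hc => (hcard c hc).trans (h c hc).1, hrow, fun c hc => ?_⟩
    obtain ⟨B, hB, hle⟩ := hkey c hc
    exact ⟨B, hB, setLEF_trans hle (h c hc)⟩
  · intro h c hc
    have hmem : memRSSYT n γ (fun c => col n γ c) :=
      ⟨fun c hc => rfl,
       fun c hc k hk => jthLargestF_mono (col_subset n γ (Nat.le_succ c)) k,
       fun c hc => ⟨col n γ c, key_chain n γ c hc, setLEF_refl n _⟩⟩
    obtain ⟨_, _, hkey⟩ := h _ hmem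
    obtain ⟨B, hB, hle⟩ := hkey c hc
    rw [lhdChain_unique _ hB (key_chain n γ c hc)] at hle
    exact hle
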